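/- For every real number δ > -3/2, the following are equivalent: (i) there exist constants C and x₁ > 0 such that |R(x)| ≤ C x^{δ+1} for all real x ≥ x₁; (ii) there exist a constant C' and a natural number k₁ ≥ 1 such that |c_k| ≤ C' k^δ for all natural numbers k ≥ k₁. -/

import Mathlib

/-- The real value of the Riemann zeta function at a real argument. -/
noncomputable def zetaR (s : ℝ) : ℝ := (riemannZeta (s : ℂ)).re

/-- The Riesz function `R(x) = x ∑_{k=0}^∞ (-1)^k x^k / (k! ζ(2k+2))`. -/
noncomputable def RieszR (x : ℝ) : ℝ :=
  x * ∑' k : ℕ, (-1 : ℝ) ^ k * x ^ k / (k.factorial * zetaR (2 * k + 2))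

/-- The Báez-Duarte sequence `c_k = ∑_{j=0}^k (-1)^j C(k,j) / ζ(2j+2)`. -/
noncomputable def cBD (k : ℕ) : ℝ :=
  ∑ j ∈ Finset.range (k + 1), (-1 : ℝ) ^ j * (k.choose j) / zetaR (2 * j + 2)

namespace BDaux

open Real ArithmeticFunction

/-- `pp n = n + 1` as a real number. -/
noncomputable def pp (n : ℕ) : ℝ := (n : ℝ) + 1

lemma pp_pos (n : ℕ) : 0 < pp n := by unfold pp; positivity

lemma pp_cast (n : ℕ) : pp n = ((n + 1 : ℕ) : ℝ) := by simp [pp]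

/-- `tt n = 1/(n+1)^2`. -/
noncomputable def tt (n : ℕ) : ℝ := ((pp n) ^ 2)⁻¹

lemma tt_pos (n : ℕ) : 0 < tt n := by
  have := pp_pos n
  unfold tt; exact inv_pos.mpr (by nlinarith)

lemma one_le_pp (n : ℕ) : 1 ≤ pp n := by unfold pp; linarith [Nat.cast_nonneg (α := ℝ) n]

lemma tt_le_one (n : ℕ) : tt n ≤ 1 := by
  unfold tt
  rw [inv_le_one_iff₀]
  right
  nlinarith [pp_pos n, one_le_pp n]

/-- `muR n = μ(n+1)` as a real number. -/
noncomputable def muR (n : ℕ) : ℝ := ((moebius (n + 1) : ℤ) : ℝ)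

lemma abs_muR_le_one (n : ℕ) : |muR n| ≤ 1 := by
  unfold muR
  rw [← Int.cast_abs]
  exact_mod_cast abs_moebius_le_one

/-- The kernel function `g(x) = ∑ μ(n)/n² e^{-x/n²}`. -/
noncomputable def gBD (x : ℝ) : ℝ := ∑' n : ℕ, muR n * tt n * Real.exp (-(x * tt n))

lemma summable_tt : Summable tt := by
  have h : Summable (fun n : ℕ => (((n : ℝ)) ^ 2)⁻¹) := by
    simpa only [one_div] using Real.summable_one_div_nat_pow.mpr (le_refl 2)
  have h2 := (summable_nat_add_iff 1).mpr h
  refine h2.congr fun n => ?_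
  rw [tt, pp_cast n]


lemma riemannZeta_ofReal' {s : ℝ} (hs : 1 < s) : riemannZeta (s : ℂ) = ((zetaR s : ℝ) : ℂ) := by
  have hs' : 1 < (s : ℂ).re := by simpa using hs
  have h := zeta_eq_tsum_one_div_nat_add_one_cpow hs'
  have h2 : ∀ n : ℕ, (1 : ℂ) / ((n : ℂ) + 1) ^ (s : ℂ) = ((1 / ((n : ℝ) + 1) ^ s : ℝ) : ℂ) := by
    intro n
    have hn : ((n : ℂ) + 1) = (((n : ℝ) + 1 : ℝ) : ℂ) := by push_cast; ring
    rw [hn, ← Complex.ofReal_cpow (by positivity)]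
    push_cast
    ring
  simp_rw [h2, ← Complex.ofReal_tsum] at h
  unfold zetaR
  rw [h, Complex.ofReal_re]

lemma zetaR_ne_zero {s : ℝ} (hs : 1 < s) : zetaR s ≠ 0 := by
  intro h0
  have hne := riemannZeta_ne_zero_of_one_lt_re (s := (s : ℂ)) (by simpa using hs)
  rw [riemannZeta_ofReal' hs, h0] at hne
  simp at hne

lemma hasSum_mu {s : ℝ} (hs : 1 < s) :
    HasSum (fun n : ℕ => muR n / (pp n) ^ s) (zetaR s)⁻¹ := by
  have hs' : 1 < (s : ℂ).re := by simpa using hs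
  have hsum : LSeriesSummable (fun n => ((moebius n : ℤ) : ℂ)) (s : ℂ) :=
    LSeriesSummable_moebius_iff.mpr hs'
  have hL : LSeries (fun n => ((moebius n : ℤ) : ℂ)) (s : ℂ) = (riemannZeta (s : ℂ))⁻¹ := by
    have h1 := LSeries_zeta_mul_Lseries_moebius hs'
    rw [LSeries_zeta_eq_riemannZeta hs'] at h1
    exact eq_inv_of_mul_eq_one_left (by rw [mul_comm] at h1; exact h1)
  unfold LSeries at hL
  have hhs := hsum.hasSum
  rw [hL] at hhs
  have hshift := (hasSum_nat_add_iff' (f := LSeries.term (fun n => ((moebius n : ℤ) : ℂ)) (s : ℂ)) 1).mpr hhs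
  simp only [Finset.range_one, Finset.sum_singleton, LSeries.term_zero, sub_zero] at hshift
  have hterm : ∀ n : ℕ, LSeries.term (fun n => ((moebius n : ℤ) : ℂ)) (s : ℂ) (n + 1)
      = ((muR n / (pp n) ^ s : ℝ) : ℂ) := by
    intro n
    rw [LSeries.term_of_ne_zero (Nat.succ_ne_zero n)]
    have hcast : ((n + 1 : ℕ) : ℂ) = ((pp n : ℝ) : ℂ) := by rw [pp_cast]; push_cast; ring
    rw [hcast, ← Complex.ofReal_cpow (pp_pos n).le]
    rw [muR, Complex.ofReal_div]
    norm_cast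
  simp_rw [hterm] at hshift
  have hz : (riemannZeta (s : ℂ))⁻¹ = (((zetaR s)⁻¹ : ℝ) : ℂ) := by
    rw [riemannZeta_ofReal' hs, Complex.ofReal_inv]
  rw [hz] at hshift
  exact Complex.hasSum_ofReal.mp hshift

lemma hasSum_mu_nat (j : ℕ) :
    HasSum (fun n : ℕ => muR n * (tt n) ^ (j + 1)) (zetaR (2 * j + 2))⁻¹ := by
  have hs : (1 : ℝ) < 2 * (j : ℝ) + 2 := by
    have : (0:ℝ) ≤ (j:ℝ) := Nat.cast_nonneg j
    linarith
  have h := hasSum_mu hs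
  have heq : (fun n : ℕ => muR n / (pp n) ^ (2 * (j : ℝ) + 2))
      = fun n : ℕ => muR n * (tt n) ^ (j + 1) := by
    funext n
    have hcast : (2 * (j : ℝ) + 2) = ((2 * j + 2 : ℕ) : ℝ) := by push_cast; ring
    rw [hcast, Real.rpow_natCast, div_eq_mul_inv]
    congr 1
    rw [tt, ← inv_pow, ← inv_pow, ← pow_mul,
      (by omega : 2 * j + 2 = 2 * (j + 1))]
  rwa [heq] at h

lemma summable_muExp (x : ℝ) : Summable (fun n => muR n * tt n * Real.exp (-(x * tt n))) := by
  refine Summable.of_norm_bounded (summable_tt.mul_right (Real.exp |x|)) fun n => ?_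
  have h1 := abs_muR_le_one n
  have h2 : Real.exp (-(x * tt n)) ≤ Real.exp |x| :=
    Real.exp_le_exp.mpr (by nlinarith [neg_abs_le x, abs_nonneg x, tt_pos n, tt_le_one n])
  have h3 := mul_le_mul (mul_le_mul_of_nonneg_right h1 (tt_pos n).le) h2 (Real.exp_pos _).le
    (by nlinarith [tt_pos n] : (0:ℝ) ≤ 1 * tt n)
  rw [Real.norm_eq_abs, abs_mul, abs_mul, Real.abs_exp, abs_of_pos (tt_pos n)]
  simpa using h3

lemma summable_muPow (m : ℕ) : Summable (fun n => muR n * tt n * (1 - tt n) ^ m) := by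
  refine Summable.of_norm_bounded summable_tt fun n => ?_
  have h1 := abs_muR_le_one n
  have h2 : |(1 - tt n) ^ m| ≤ 1 := by
    rw [abs_pow]
    apply pow_le_one₀ (abs_nonneg _)
    rw [abs_le]
    constructor <;> nlinarith [tt_pos n, tt_le_one n]
  rw [Real.norm_eq_abs, abs_mul, abs_mul, abs_of_pos (tt_pos n)]
  calc |muR n| * tt n * |(1 - tt n) ^ m| ≤ 1 * tt n * 1 :=
        mul_le_mul (mul_le_mul_of_nonneg_right h1 (tt_pos n).le) h2 (abs_nonneg _)
          (by nlinarith [tt_pos n])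
    _ = tt n := by ring

lemma RieszR_eq (x : ℝ) : RieszR x = x * gBD x := by
  classical
  set F : ℕ × ℕ → ℝ :=
    fun p => ((-x) ^ p.1 / (p.1).factorial) * (muR p.2 * (tt p.2) ^ (p.1 + 1)) with hF
  set A : ℕ → ℝ := fun k => |x| ^ k / (k.factorial : ℝ) with hA
  have hA0 : ∀ k, 0 ≤ A k := fun k => by positivity
  have hFb : ∀ k n : ℕ, |F (k, n)| ≤ A k * tt n := by
    intro k n
    simp only [hF, hA]
    rw [abs_mul, abs_div, abs_pow, abs_neg, abs_mul, abs_pow,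
      abs_of_pos (tt_pos n), Nat.abs_cast]
    have h1 := abs_muR_le_one n
    have h2 : tt n ^ (k + 1) ≤ tt n := by
      calc tt n ^ (k+1) ≤ tt n ^ 1 :=
            pow_le_pow_of_le_one (tt_pos n).le (tt_le_one n) (by omega)
        _ = tt n := pow_one _
    have h3 : |muR n| * tt n ^ (k+1) ≤ 1 * tt n :=
      mul_le_mul h1 h2 (pow_nonneg (tt_pos n).le _) zero_le_one
    calc |x| ^ k / (k.factorial : ℝ) * (|muR n| * tt n ^ (k + 1))
        ≤ |x| ^ k / (k.factorial : ℝ) * (1 * tt n) :=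
          mul_le_mul_of_nonneg_left h3 (by positivity)
      _ = |x| ^ k / (k.factorial : ℝ) * tt n := by ring
  have hslice : ∀ k : ℕ, Summable fun n => |F (k, n)| := by
    intro k
    exact Summable.of_nonneg_of_le (fun n => abs_nonneg _) (fun n => hFb k n)
      (summable_tt.mul_left (A k))
  have habs : Summable fun p : ℕ × ℕ => |F p| := by
    rw [summable_prod_of_nonneg (fun p => abs_nonneg _)]
    refine ⟨fun k => hslice k, ?_⟩
    refine Summable.of_nonneg_of_le (fun k => tsum_nonneg fun n => abs_nonneg _)
      (fun k => ?_) ((Real.summable_pow_div_factorial |x|).mul_right (∑' n, tt n))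
    calc (∑' n, |F (k, n)|) ≤ ∑' n, A k * tt n :=
          Summable.tsum_le_tsum (fun n => hFb k n) (hslice k) (summable_tt.mul_left (A k))
      _ = A k * ∑' n, tt n := tsum_mul_left
      _ = |x| ^ k / (k.factorial : ℝ) * ∑' n, tt n := rfl
  have hsumF : Summable F := habs.of_abs
  have hexp : ∀ y : ℝ, ∑' k : ℕ, y ^ k / (k.factorial : ℝ) = Real.exp y := by
    intro y
    rw [Real.exp_eq_exp_ℝ, NormedSpace.exp_eq_tsum_div]
  have key : (∑' k : ℕ, (-1 : ℝ) ^ k * x ^ k / (k.factorial * zetaR (2 * k + 2))) = gBD x := by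
    have step1 : ∀ k : ℕ, (-1 : ℝ) ^ k * x ^ k / (k.factorial * zetaR (2 * k + 2))
        = ∑' n : ℕ, F (k, n) := by
      intro k
      have h0 : (-1 : ℝ) ^ k * x ^ k / (k.factorial * zetaR (2 * k + 2))
          = ((-x) ^ k / k.factorial) * (zetaR (2 * k + 2))⁻¹ := by
        rw [neg_pow]
        ring
      rw [h0, ← (hasSum_mu_nat k).tsum_eq, ← tsum_mul_left]
    have step3 : ∀ n : ℕ, (∑' k : ℕ, F (k, n)) = muR n * tt n * Real.exp (-(x * tt n)) := by
      intro n
      have hterm : ∀ k : ℕ, F (k, n) = (muR n * tt n) * ((-(x * tt n)) ^ k / k.factorial) := by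
        intro k
        simp only [hF]
        rw [show -(x * tt n) = (-x) * tt n by ring, mul_pow, pow_succ]
        ring
      rw [tsum_congr hterm, tsum_mul_left, hexp (-(x * tt n))]
    calc (∑' k : ℕ, (-1 : ℝ) ^ k * x ^ k / (k.factorial * zetaR (2 * k + 2)))
        = ∑' (k : ℕ) (n : ℕ), F (k, n) := tsum_congr step1
      _ = ∑' (n : ℕ) (k : ℕ), F (k, n) := Summable.tsum_comm (f := fun n k => F (k, n)) hsumF.prod_symm
      _ = ∑' n : ℕ, muR n * tt n * Real.exp (-(x * tt n)) := tsum_congr step3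
  rw [RieszR, key, gBD]

lemma cBD_eq (k : ℕ) : cBD k = ∑' n : ℕ, muR n * tt n * (1 - tt n) ^ k := by
  have hsml : ∀ j ∈ Finset.range (k+1),
      Summable fun n : ℕ => ((-1 : ℝ) ^ j * (k.choose j)) * (muR n * tt n ^ (j+1)) :=
    fun j _ => (hasSum_mu_nat j).summable.mul_left _
  unfold cBD
  have h1 : ∀ j ∈ Finset.range (k+1), (-1 : ℝ) ^ j * (k.choose j) / zetaR (2 * j + 2)
      = ∑' n : ℕ, ((-1 : ℝ) ^ j * (k.choose j)) * (muR n * tt n ^ (j+1)) := by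
    intro j _
    rw [div_eq_mul_inv, ← (hasSum_mu_nat j).tsum_eq, ← tsum_mul_left]
  rw [Finset.sum_congr rfl h1, ← Summable.tsum_finsetSum hsml]
  apply tsum_congr
  intro n
  rw [show (1 : ℝ) - tt n = -tt n + 1 by ring, add_pow, Finset.mul_sum]
  apply Finset.sum_congr rfl
  intro j _
  rw [one_pow, neg_pow, pow_succ]
  ring

lemma exp_neg_le_rpow {a : ℝ} (ha : 0 ≤ a) :
    ∃ C : ℝ, 0 < C ∧ ∀ u : ℝ, 0 < u → Real.exp (-u) ≤ C * u ^ (-a) := by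
  set N := Nat.ceil a with hN
  refine ⟨(N.factorial : ℝ), by positivity, fun u hu => ?_⟩
  have hua : (0:ℝ) < u ^ a := Real.rpow_pos_of_pos hu a
  rw [Real.rpow_neg hu.le, ← div_eq_mul_inv, le_div_iff₀ hua]
  have hfac : (1:ℝ) ≤ (N.factorial : ℝ) := by exact_mod_cast Nat.one_le_iff_ne_zero.mpr N.factorial_ne_zero
  rcases le_or_gt u 1 with hu1 | hu1
  · have e1 : u ^ a ≤ 1 := Real.rpow_le_one hu.le hu1 ha
    have e2 : Real.exp (-u) ≤ 1 := by
      rw [show (1:ℝ) = Real.exp 0 by simp]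
      exact Real.exp_le_exp.mpr (by linarith)
    nlinarith [Real.exp_pos (-u)]
  · have e1 : u ^ a ≤ u ^ (N : ℕ) := by
      rw [← Real.rpow_natCast u N]
      exact Real.rpow_le_rpow_of_exponent_le hu1.le (Nat.le_ceil a)
    have e2 : u ^ (N : ℕ) ≤ (N.factorial : ℝ) * Real.exp u := by
      have h := Real.pow_div_factorial_le_exp u hu.le N
      rw [div_le_iff₀ (by positivity)] at h
      linarith
    calc Real.exp (-u) * u ^ a ≤ Real.exp (-u) * ((N.factorial : ℝ) * Real.exp u) :=
          mul_le_mul_of_nonneg_left (e1.trans e2) (Real.exp_pos _).le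
      _ = (N.factorial : ℝ) * (Real.exp (-u) * Real.exp u) := by ring
      _ = (N.factorial : ℝ) := by rw [← Real.exp_add]; simp

lemma majorant {a e : ℝ} (ha : 0 ≤ a) (he : 2 * a + e < -1) :
    ∃ K : ℝ, 0 ≤ K ∧ ∀ m : ℝ, 1 ≤ m →
      (Summable fun n : ℕ => (pp (n+1)) ^ e * Real.exp (-(m * tt (n+1)))) ∧
      (∑' n : ℕ, (pp (n+1)) ^ e * Real.exp (-(m * tt (n+1)))) ≤ K * m ^ (-a) := by
  obtain ⟨C, hC, hCb⟩ := exp_neg_le_rpow ha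
  have hs : Summable (fun n : ℕ => (pp (n+1)) ^ (e + 2*a)) := by
    have h1 : Summable (fun n : ℕ => ((n:ℝ)) ^ (e + 2*a)) :=
      Real.summable_nat_rpow.mpr (by linarith)
    have h2 := (summable_nat_add_iff 2).mpr h1
    refine h2.congr fun n => ?_
    rw [pp_cast]
  set S := ∑' n : ℕ, (pp (n+1)) ^ (e + 2*a) with hS
  have hS0 : 0 ≤ S := tsum_nonneg fun n => Real.rpow_nonneg (pp_pos _).le _
  refine ⟨C * S, mul_nonneg hC.le hS0, fun m hm => ?_⟩
  have hm0 : (0:ℝ) < m := by linarith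
  have hb : ∀ n : ℕ, (pp (n+1)) ^ e * Real.exp (-(m * tt (n+1)))
      ≤ C * m ^ (-a) * (pp (n+1)) ^ (e + 2*a) := by
    intro n
    have htp := tt_pos (n+1)
    have hppp := pp_pos (n+1)
    have h1 : Real.exp (-(m * tt (n+1))) ≤ C * (m * tt (n+1)) ^ (-a) :=
      hCb _ (by positivity)
    have h2 : (m * tt (n+1)) ^ (-a) = m ^ (-a) * (tt (n+1)) ^ (-a) :=
      Real.mul_rpow hm0.le htp.le
    have h3 : (tt (n+1)) ^ (-a) = (pp (n+1)) ^ (2*a) := by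
      rw [tt, ← Real.rpow_natCast (pp (n+1)) 2,
        Real.inv_rpow (Real.rpow_nonneg hppp.le _),
        ← Real.rpow_neg (Real.rpow_nonneg hppp.le _), neg_neg,
        ← Real.rpow_mul hppp.le]
      norm_num [mul_comm]
    calc (pp (n+1)) ^ e * Real.exp (-(m * tt (n+1)))
        ≤ (pp (n+1)) ^ e * (C * (m * tt (n+1)) ^ (-a)) :=
          mul_le_mul_of_nonneg_left h1 (Real.rpow_nonneg hppp.le _)
      _ = C * m ^ (-a) * ((pp (n+1)) ^ e * (pp (n+1)) ^ (2*a)) := by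
          rw [h2, h3]; ring
      _ = C * m ^ (-a) * (pp (n+1)) ^ (e + 2*a) := by
          rw [← Real.rpow_add hppp]
  have hsum1 : Summable fun n : ℕ => (pp (n+1)) ^ e * Real.exp (-(m * tt (n+1))) := by
    refine Summable.of_nonneg_of_le (fun n => ?_) hb (hs.mul_left (C * m ^ (-a)))
    exact mul_nonneg (Real.rpow_nonneg (pp_pos _).le _) (Real.exp_pos _).le
  refine ⟨hsum1, ?_⟩
  calc (∑' n : ℕ, (pp (n+1)) ^ e * Real.exp (-(m * tt (n+1))))
      ≤ ∑' n : ℕ, C * m ^ (-a) * (pp (n+1)) ^ (e + 2*a) :=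
        Summable.tsum_le_tsum hb hsum1 (hs.mul_left _)
    _ = C * m ^ (-a) * S := tsum_mul_left
    _ = C * S * m ^ (-a) := by ring

lemma diff_bound {t : ℝ} (ht : 0 < t) (ht2 : t ≤ 1/2) {m : ℕ} {x : ℝ}
    (hm : (m : ℝ) ≤ x) (hx : x ≤ m + 1) :
    |Real.exp (-(x * t)) - (1 - t) ^ m| ≤ (t + 2 * m * t ^ 2) * Real.exp (-((m : ℝ) * t)) := by
  set E := Real.exp (-((m:ℝ) * t)) with hE
  have hE0 : 0 < E := Real.exp_pos _
  have hub1 : Real.exp (-(x * t)) ≤ E := Real.exp_le_exp.mpr (by nlinarith)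
  have hlb1 : E * (1 - t) ≤ Real.exp (-(x * t)) := by
    have h1 : -(x*t) = -((m:ℝ)*t) + (-(x - (m:ℝ))*t) := by ring
    rw [h1, Real.exp_add]
    refine mul_le_mul_of_nonneg_left ?_ hE0.le
    have h2 : 1 - t ≤ 1 + (-(x - (m:ℝ))*t) := by nlinarith
    refine h2.trans ?_
    linarith [Real.add_one_le_exp (-(x - (m:ℝ))*t)]
  have hub2 : (1 - t) ^ m ≤ E := by
    have h1 : (1 - t) ≤ Real.exp (-t) := by linarith [Real.add_one_le_exp (-t)]
    have h2 : (1 - t) ^ m ≤ Real.exp (-t) ^ m := pow_le_pow_left₀ (by linarith) h1 m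
    rw [← Real.exp_nat_mul] at h2
    refine h2.trans (le_of_eq ?_)
    rw [hE]
    ring_nf
  have hlb2 : E * (1 - 2 * m * t^2) ≤ (1 - t) ^ m := by
    by_cases hmt : 1 - 2*(m:ℝ)*t^2 ≤ 0
    · have := pow_nonneg (by linarith : (0:ℝ) ≤ 1 - t) m
      nlinarith
    · push_neg at hmt
      have h0 : (0:ℝ) < 1 - t := by linarith
      have hlog : -(t + 2*t^2) ≤ Real.log (1 - t) := by
        have h1 : Real.log (1 - t) = -Real.log (1/(1-t)) := by
          rw [Real.log_div one_ne_zero (ne_of_gt h0), Real.log_one]; ring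
        have h2 : Real.log (1/(1-t)) ≤ 1/(1-t) - 1 := Real.log_le_sub_one_of_pos (by positivity)
        have h3 : 1/(1-t) - 1 = t/(1-t) := by field_simp; ring
        have h4 : t/(1-t) ≤ t + 2*t^2 := by rw [div_le_iff₀ h0]; nlinarith
        rw [h3] at h2
        linarith
      have h5 : (1 - t)^m = Real.exp ((m:ℕ) * Real.log (1 - t)) := by
        rw [Real.exp_nat_mul, Real.exp_log h0]
      have h6 : Real.exp (-((m:ℝ)*t) + -(2*(m:ℝ)*t^2)) ≤ (1 - t)^m := by
        rw [h5]
        apply Real.exp_le_exp.mpr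
        have h7 := mul_le_mul_of_nonneg_left hlog (Nat.cast_nonneg (α := ℝ) m)
        nlinarith
      rw [Real.exp_add] at h6
      refine le_trans ?_ h6
      exact mul_le_mul_of_nonneg_left
        (by linarith [Real.add_one_le_exp (-(2*(m:ℝ)*t^2))]) hE0.le
  rw [abs_sub_le_iff]
  have hq1 : 0 ≤ t * E := mul_nonneg ht.le hE0.le
  have hq2 : 0 ≤ 2*(m:ℝ)*t^2 * E :=
    mul_nonneg (by positivity) hE0.le
  constructor <;> nlinarith

lemma floor_rpow_le {x : ℝ} (hx : 2 ≤ x) (e : ℝ) :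
    ((⌊x⌋₊ : ℝ)) ^ e ≤ 2 ^ |e| * x ^ e := by
  have hx0 : (0:ℝ) < x := by linarith
  have hfl : (⌊x⌋₊ : ℝ) ≤ x := Nat.floor_le hx0.le
  have hfl2 : x / 2 ≤ (⌊x⌋₊ : ℝ) := by
    have h1 : x - 1 < (⌊x⌋₊ : ℝ) := Nat.sub_one_lt_floor x
    linarith
  have hflpos : (0:ℝ) < (⌊x⌋₊ : ℝ) := by linarith
  rcases le_or_gt 0 e with he | he
  · rw [abs_of_nonneg he]
    have h1 : (⌊x⌋₊:ℝ)^e ≤ x^e := Real.rpow_le_rpow hflpos.le hfl he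
    have h2 : (1:ℝ) ≤ 2^e := by
      rw [show (1:ℝ) = (2:ℝ)^(0:ℝ) by simp]
      exact Real.rpow_le_rpow_of_exponent_le one_le_two he
    nlinarith [Real.rpow_nonneg hx0.le e]
  · rw [abs_of_neg he]
    have h1 : (⌊x⌋₊:ℝ)^e ≤ (x/2)^e :=
      Real.rpow_le_rpow_of_nonpos (by linarith) hfl2 he.le
    have h2 : (x/2)^e = 2^(-e) * x^e := by
      rw [div_eq_mul_inv, Real.mul_rpow hx0.le (by norm_num),
        Real.inv_rpow (by norm_num : (0:ℝ) ≤ 2), ← Real.rpow_neg (by norm_num : (0:ℝ) ≤ 2)]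
      ring
    rw [h2] at h1
    exact h1

set_option maxHeartbeats 2000000 in
lemma core {δ : ℝ} (hδ : -3/2 < δ) :
    ∃ K : ℝ, 0 ≤ K ∧ ∀ x : ℝ, 2 ≤ x → |gBD x - cBD ⌊x⌋₊| ≤ K * x ^ δ := by
  set a : ℝ := max 0 (-δ) with hAdef
  set b : ℝ := max 0 (1 - δ) with hBdef
  have ha0 : 0 ≤ a := le_max_left _ _
  have hb0 : 0 ≤ b := le_max_left _ _
  have hna : -a ≤ δ := by
    have := le_max_right 0 (-δ); simp only [hAdef]; linarith [le_max_right (0:ℝ) (-δ)]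
  have h1b : 1 - b ≤ δ := by linarith [le_max_right (0:ℝ) (1 - δ)]
  have ha4 : 2 * a + (-4) < -1 := by
    have : a < 3/2 := max_lt (by norm_num) (by linarith)
    linarith
  have hb6 : 2 * b + (-6) < -1 := by
    have : b < 5/2 := max_lt (by norm_num) (by linarith)
    linarith
  obtain ⟨C₀, hC₀, hC₀b⟩ := exp_neg_le_rpow ha0
  obtain ⟨K₁, hK₁, hK₁b⟩ := majorant (a := a) (e := -4) ha0 ha4
  obtain ⟨K₂, hK₂, hK₂b⟩ := majorant (a := b) (e := -6) hb0 hb6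
  refine ⟨C₀ + K₁ * 2 ^ |(-a)| + 2 * K₂ * 2 ^ |1 - b|, by positivity, fun x hx => ?_⟩
  set m : ℕ := ⌊x⌋₊ with hmdef
  have hx0 : (0:ℝ) < x := by linarith
  have hx1 : (1:ℝ) ≤ x := by linarith
  have hm2 : 2 ≤ m := Nat.le_floor (by exact_mod_cast hx)
  have hm1r : (1:ℝ) ≤ (m:ℝ) := by exact_mod_cast Nat.one_le_iff_ne_zero.mpr (by omega)
  have hm0 : (0:ℝ) < (m:ℝ) := by linarith
  have hmx : (m:ℝ) ≤ x := Nat.floor_le hx0.le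
  have hxm : x ≤ (m:ℝ) + 1 := (Nat.lt_floor_add_one x).le
  -- the difference series
  set h : ℕ → ℝ :=
    fun n => muR n * tt n * Real.exp (-(x * tt n)) - muR n * tt n * (1 - tt n) ^ m with hhdef
  have hgs := summable_muExp x
  have hcs := summable_muPow m
  have hsub : Summable h := hgs.sub hcs
  have hdiff : gBD x - cBD m = ∑' n, h n := by
    rw [gBD, cBD_eq m, Summable.tsum_sub hgs hcs]
  have habs0 : |∑' n, h n| ≤ ∑' n, |h n| := by
    simpa [Real.norm_eq_abs] using
      norm_tsum_le_tsum_norm (f := h) (by simpa [Real.norm_eq_abs] using hsub.abs)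
  -- head term
  have htt0 : tt 0 = 1 := by simp [tt, pp]
  have hmu0 : muR 0 = 1 := by simp [muR]
  have hh0 : |h 0| = Real.exp (-x) := by
    have he : h 0 = Real.exp (-x) := by
      simp only [hhdef, htt0, hmu0]
      rw [show (1:ℝ) - 1 = 0 by ring, zero_pow (by omega : m ≠ 0)]
      simp
    rw [he, abs_of_pos (Real.exp_pos _)]
  -- rpow forms of tt powers
  have htt_r : ∀ k : ℕ, tt k = pp k ^ (-2 : ℝ) := by
    intro k
    rw [tt, ← Real.rpow_natCast (pp k) 2, ← Real.rpow_neg (pp_pos k).le]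
    norm_num
  have htt2 : ∀ k : ℕ, tt k ^ 2 = pp k ^ (-4 : ℝ) := by
    intro k
    rw [htt_r, ← Real.rpow_natCast (pp k ^ (-2:ℝ)) 2, ← Real.rpow_mul (pp_pos k).le]
    norm_num
  have htt3 : ∀ k : ℕ, tt k ^ 3 = pp k ^ (-6 : ℝ) := by
    intro k
    rw [htt_r, ← Real.rpow_natCast (pp k ^ (-2:ℝ)) 3, ← Real.rpow_mul (pp_pos k).le]
    norm_num
  -- tail estimate
  have htail : ∀ n : ℕ, |h (n+1)| ≤
      pp (n+1) ^ (-4:ℝ) * Real.exp (-((m:ℝ) * tt (n+1)))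
      + 2*(m:ℝ) * (pp (n+1) ^ (-6:ℝ) * Real.exp (-((m:ℝ) * tt (n+1)))) := by
    intro n
    have ht := tt_pos (n+1)
    have hp2 : (2:ℝ) ≤ pp (n+1) := by
      rw [pp]; push_cast; linarith [Nat.cast_nonneg (α := ℝ) n]
    have ht2 : tt (n+1) ≤ 1/2 := by
      have h4 : (2:ℝ) ≤ pp (n+1)^2 := by nlinarith
      rw [tt]
      have := inv_anti₀ (by norm_num : (0:ℝ) < 2) h4
      linarith
    have hd := diff_bound ht ht2 (m := m) hmx hxm
    have hstep : |h (n+1)| = |muR (n+1)| * tt (n+1)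
        * |Real.exp (-(x * tt (n+1))) - (1 - tt (n+1)) ^ m| := by
      simp only [hhdef, ← mul_sub, abs_mul, abs_of_pos ht]
    rw [hstep]
    calc |muR (n+1)| * tt (n+1) * |Real.exp (-(x * tt (n+1))) - (1 - tt (n+1)) ^ m|
        ≤ 1 * tt (n+1) * ((tt (n+1) + 2 * (m:ℝ) * tt (n+1) ^ 2)
            * Real.exp (-((m:ℝ) * tt (n+1)))) := by
          apply mul_le_mul (mul_le_mul_of_nonneg_right (abs_muR_le_one _) ht.le) hd
            (abs_nonneg _) (by nlinarith)
      _ = tt (n+1)^2 * Real.exp (-((m:ℝ) * tt (n+1)))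
            + 2*(m:ℝ) * (tt (n+1)^3 * Real.exp (-((m:ℝ) * tt (n+1)))) := by ring
      _ = pp (n+1) ^ (-4:ℝ) * Real.exp (-((m:ℝ) * tt (n+1)))
            + 2*(m:ℝ) * (pp (n+1) ^ (-6:ℝ) * Real.exp (-((m:ℝ) * tt (n+1)))) := by
          rw [htt2, htt3]
  obtain ⟨hsA, hbA⟩ := hK₁b (m:ℝ) hm1r
  obtain ⟨hsB, hbB⟩ := hK₂b (m:ℝ) hm1r
  have hshift : Summable fun n => |h (n+1)| := (summable_nat_add_iff 1).mpr hsub.abs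
  have htails : (∑' n : ℕ, |h (n+1)|) ≤ K₁ * (m:ℝ) ^ (-a) + 2*(m:ℝ) * (K₂ * (m:ℝ) ^ (-b)) := by
    calc (∑' n : ℕ, |h (n+1)|)
        ≤ ∑' n : ℕ, (pp (n+1) ^ (-4:ℝ) * Real.exp (-((m:ℝ) * tt (n+1)))
            + 2*(m:ℝ) * (pp (n+1) ^ (-6:ℝ) * Real.exp (-((m:ℝ) * tt (n+1))))) :=
          Summable.tsum_le_tsum htail hshift (hsA.add (hsB.mul_left _))
      _ = (∑' n : ℕ, pp (n+1) ^ (-4:ℝ) * Real.exp (-((m:ℝ) * tt (n+1))))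
            + ∑' n : ℕ, 2*(m:ℝ) * (pp (n+1) ^ (-6:ℝ) * Real.exp (-((m:ℝ) * tt (n+1)))) :=
          Summable.tsum_add hsA (hsB.mul_left _)
      _ = (∑' n : ℕ, pp (n+1) ^ (-4:ℝ) * Real.exp (-((m:ℝ) * tt (n+1))))
            + 2*(m:ℝ) * ∑' n : ℕ, pp (n+1) ^ (-6:ℝ) * Real.exp (-((m:ℝ) * tt (n+1))) := by
          rw [tsum_mul_left]
      _ ≤ K₁ * (m:ℝ) ^ (-a) + 2*(m:ℝ) * (K₂ * (m:ℝ) ^ (-b)) := by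
          have := mul_le_mul_of_nonneg_left hbB (by positivity : (0:ℝ) ≤ 2*(m:ℝ))
          linarith
  -- convert the three pieces to powers of x
  have piece1 : Real.exp (-x) ≤ C₀ * x ^ δ := by
    have h1 := hC₀b x hx0
    have h2 : x ^ (-a) ≤ x ^ δ := Real.rpow_le_rpow_of_exponent_le hx1 hna
    nlinarith
  have piece2 : K₁ * (m:ℝ) ^ (-a) ≤ K₁ * 2 ^ |(-a)| * x ^ δ := by
    have h1 : ((m:ℝ)) ^ (-a) ≤ 2 ^ |(-a)| * x ^ (-a) := floor_rpow_le hx (-a)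
    have h2 : x ^ (-a) ≤ x ^ δ := Real.rpow_le_rpow_of_exponent_le hx1 hna
    have h3 : (0:ℝ) ≤ 2 ^ |(-a)| := by positivity
    calc K₁ * (m:ℝ) ^ (-a) ≤ K₁ * (2 ^ |(-a)| * x ^ (-a)) :=
          mul_le_mul_of_nonneg_left h1 hK₁
      _ ≤ K₁ * (2 ^ |(-a)| * x ^ δ) :=
          mul_le_mul_of_nonneg_left (mul_le_mul_of_nonneg_left h2 h3) hK₁
      _ = K₁ * 2 ^ |(-a)| * x ^ δ := by ring
  have piece3 : 2*(m:ℝ) * (K₂ * (m:ℝ) ^ (-b)) ≤ 2 * K₂ * 2 ^ |1 - b| * x ^ δ := by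
    have hmm : (m:ℝ) * (m:ℝ) ^ (-b) = (m:ℝ) ^ (1 - b) := by
      rw [show (1:ℝ) - b = 1 + (-b) by ring, Real.rpow_add hm0, Real.rpow_one]
    have h1 : ((m:ℝ)) ^ (1 - b) ≤ 2 ^ |1 - b| * x ^ (1 - b) := floor_rpow_le hx (1 - b)
    have h2 : x ^ (1 - b) ≤ x ^ δ := Real.rpow_le_rpow_of_exponent_le hx1 h1b
    have h3 : (0:ℝ) ≤ 2 ^ |1 - b| := by positivity
    calc 2*(m:ℝ) * (K₂ * (m:ℝ) ^ (-b)) = 2 * K₂ * ((m:ℝ) * (m:ℝ) ^ (-b)) := by ring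
      _ = 2 * K₂ * (m:ℝ) ^ (1 - b) := by rw [hmm]
      _ ≤ 2 * K₂ * (2 ^ |1 - b| * x ^ (1 - b)) :=
          mul_le_mul_of_nonneg_left h1 (by positivity)
      _ ≤ 2 * K₂ * (2 ^ |1 - b| * x ^ δ) :=
          mul_le_mul_of_nonneg_left (mul_le_mul_of_nonneg_left h2 h3) (by positivity)
      _ = 2 * K₂ * 2 ^ |1 - b| * x ^ δ := by ring
  -- assemble
  calc |gBD x - cBD m| = |∑' n, h n| := by rw [hdiff]
    _ ≤ ∑' n, |h n| := habs0
    _ = |h 0| + ∑' n, |h (n+1)| := Summable.tsum_eq_zero_add hsub.abs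
    _ ≤ Real.exp (-x) + (K₁ * (m:ℝ) ^ (-a) + 2*(m:ℝ) * (K₂ * (m:ℝ) ^ (-b))) := by
        rw [hh0]
        linarith
    _ ≤ C₀ * x ^ δ + (K₁ * 2 ^ |(-a)| * x ^ δ + 2 * K₂ * 2 ^ |1 - b| * x ^ δ) := by
        linarith
    _ = (C₀ + K₁ * 2 ^ |(-a)| + 2 * K₂ * 2 ^ |1 - b|) * x ^ δ := by ring

end BDaux

theorem stmt14 (δ : ℝ) (hδ : -3 / 2 < δ) :
    (∃ C x₁ : ℝ, 0 < x₁ ∧ ∀ x : ℝ, x₁ ≤ x → |RieszR x| ≤ C * x ^ (δ + 1)) ↔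
    (∃ C' : ℝ, ∃ k₁ : ℕ, 1 ≤ k₁ ∧ ∀ k : ℕ, k₁ ≤ k → |cBD k| ≤ C' * (k : ℝ) ^ δ) := by
  obtain ⟨K, hK0, hKb⟩ := BDaux.core (by linarith : -3/2 < δ)
  constructor
  · rintro ⟨C, x₁, hx₁, hC⟩
    refine ⟨K + C, max 2 ⌈x₁⌉₊, le_trans (by norm_num) (le_max_left _ _), fun k hk => ?_⟩
    have hk2 : 2 ≤ k := le_trans (le_max_left _ _) hk
    have hkx : x₁ ≤ (k:ℝ) := by
      have h1 : (⌈x₁⌉₊ : ℝ) ≤ (k:ℝ) := by exact_mod_cast le_trans (le_max_right _ _) hk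
      exact (Nat.le_ceil x₁).trans h1
    have hk2r : (2:ℝ) ≤ (k:ℝ) := by exact_mod_cast hk2
    have hk0 : (0:ℝ) < (k:ℝ) := by linarith
    have hcore := hKb (k:ℝ) hk2r
    rw [Nat.floor_natCast] at hcore
    have hR := hC (k:ℝ) hkx
    rw [BDaux.RieszR_eq, abs_mul, abs_of_pos hk0] at hR
    have hpow : (k:ℝ) ^ (δ + 1) = (k:ℝ) ^ δ * (k:ℝ) := Real.rpow_add_one (ne_of_gt hk0) δ
    have hg : |BDaux.gBD (k:ℝ)| ≤ C * (k:ℝ) ^ δ := by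
      rw [hpow] at hR
      exact le_of_mul_le_mul_right
        (by linarith : |BDaux.gBD (k:ℝ)| * (k:ℝ) ≤ C * (k:ℝ) ^ δ * (k:ℝ)) hk0
    have htri := abs_sub_abs_le_abs_sub (cBD k) (BDaux.gBD (k:ℝ))
    rw [abs_sub_comm] at htri
    calc |cBD k| ≤ |BDaux.gBD (k:ℝ)| + |BDaux.gBD (k:ℝ) - cBD k| := by linarith
      _ ≤ C * (k:ℝ) ^ δ + K * (k:ℝ) ^ δ := add_le_add hg hcore
      _ = (K + C) * (k:ℝ) ^ δ := by ring
  · rintro ⟨C', k₁, hk₁, hC'⟩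
    have hC'0 : 0 ≤ C' := by
      have h1 := hC' k₁ le_rfl
      have h2 : (0:ℝ) < (k₁:ℝ) ^ δ :=
        Real.rpow_pos_of_pos (by exact_mod_cast hk₁ : (0:ℝ) < (k₁:ℝ)) δ
      nlinarith [abs_nonneg (cBD k₁)]
    refine ⟨C' * 2 ^ |δ| + K, (k₁:ℝ) + 2, by positivity, fun x hx => ?_⟩
    have hk1r : (1:ℝ) ≤ (k₁:ℝ) := by exact_mod_cast hk₁
    have hx2 : (2:ℝ) ≤ x := by linarith
    have hx0 : (0:ℝ) < x := by linarith
    set m : ℕ := ⌊x⌋₊ with hm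
    have hmk : k₁ ≤ m := Nat.le_floor (by linarith)
    have hcore := hKb x hx2
    have hc := hC' m hmk
    have hfl : ((m:ℝ)) ^ δ ≤ 2 ^ |δ| * x ^ δ := BDaux.floor_rpow_le hx2 δ
    have hg : |BDaux.gBD x| ≤ C' * (2 ^ |δ| * x ^ δ) + K * x ^ δ := by
      have htri := abs_sub_abs_le_abs_sub (BDaux.gBD x) (cBD m)
      have h5 : C' * ((m:ℝ)) ^ δ ≤ C' * (2 ^ |δ| * x ^ δ) :=
        mul_le_mul_of_nonneg_left hfl hC'0
      calc |BDaux.gBD x| ≤ |BDaux.gBD x - cBD m| + |cBD m| := by linarith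
        _ ≤ K * x ^ δ + C' * ((m:ℝ)) ^ δ := add_le_add hcore hc
        _ ≤ C' * (2 ^ |δ| * x ^ δ) + K * x ^ δ := by linarith
    rw [BDaux.RieszR_eq, abs_mul, abs_of_pos hx0]
    have hpow : x ^ (δ + 1) = x ^ δ * x := Real.rpow_add_one (ne_of_gt hx0) δ
    calc x * |BDaux.gBD x| ≤ x * (C' * (2 ^ |δ| * x ^ δ) + K * x ^ δ) :=
          mul_le_mul_of_nonneg_left hg hx0.le
      _ = (C' * 2 ^ |δ| + K) * (x ^ δ * x) := by ring
      _ = (C' * 2 ^ |δ| + K) * x ^ (δ + 1) := by rw [hpow]
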